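/- Let (R,B) be a fusion ring with a fixed-point-free automorphism φ of prime order p such that B has exactly two φ-orbits (so rank(R) = p + 1). Then every basis element of R is invertible, i.e., R ≅ ℤG for a finite group G of order p + 1; moreover G is an elementary abelian q-group for some prime q. -/

import Mathlib

open Finset

/-- A fusion ring with basis indexed by `Fin n`, given by its structure
constants `c`, distinguished unit basis element `one`, and duality `dual`. -/
structure FusionData (n : ℕ) where
  c : Fin n → Fin n → Fin n → ℕ
  one : Fin n
  dual : Fin n → Fin n
  dual_dual : ∀ i, dual (dual i) = i
  c_one_left : ∀ i k, c one i k = if k = i then 1 else 0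
  c_one_right : ∀ i k, c i one k = if k = i then 1 else 0
  c_dual : ∀ i j, c i j one = if j = dual i then 1 else 0
  assoc : ∀ i j l m, ∑ k, c i j k * c k l m = ∑ k, c j l k * c i k m

/-- `d` is the Frobenius–Perron dimension function: the (unique) ring
homomorphism `R → ℝ` positive on the basis. -/
def FusionData.IsFPdim {n : ℕ} (F : FusionData n) (d : Fin n → ℝ) : Prop :=
  (∀ i, 0 < d i) ∧ ∀ i j, d i * d j = ∑ k, (F.c i j k : ℝ) * d k

/-- `φ` is a fusion-ring automorphism: a permutation of the basis fixing the
unit and preserving the structure constants. -/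
def FusionData.IsAut {n : ℕ} (F : FusionData n) (φ : Equiv.Perm (Fin n)) : Prop :=
  φ F.one = F.one ∧ ∀ i j k, F.c (φ i) (φ j) (φ k) = F.c i j k

/-- `φ` is fixed-point-free: the unit is its only fixed basis element. -/
def FusionData.Fpf {n : ℕ} (F : FusionData n) (φ : Equiv.Perm (Fin n)) : Prop :=
  ∀ i, φ i = i → i = F.one

/-- A character of the fusion ring: a unital ring homomorphism `R → ℂ`,
recorded via its values on the basis. -/
def FusionData.IsChar {n : ℕ} (F : FusionData n) (χ : Fin n → ℂ) : Prop :=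
  χ F.one = 1 ∧ ∀ i j, χ i * χ j = ∑ k, (F.c i j k : ℂ) * χ k

def GTy (n : ℕ) : Type := Fin n

def toG {n : ℕ} (x : Fin n) : GTy n := x

lemma groupPart {n : ℕ} (mul : Fin n → Fin n → Fin n) (one : Fin n) (inv : Fin n → Fin n)
    (hassoc : ∀ a b c, mul (mul a b) c = mul a (mul b c))
    (hone_mul : ∀ a, mul one a = a)
    (hmul_one : ∀ a, mul a one = a)
    (hinv : ∀ a, mul (inv a) a = one)
    (φ : Equiv.Perm (Fin n))
    (hφmul : ∀ i j, φ (mul i j) = mul (φ i) (φ j))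
    (hex : ∃ x, x ≠ one)
    (horb : ∀ x y, x ≠ one → y ≠ one → ∃ k : ℕ, (φ ^ k) x = y) :
    ∃ q : ℕ, q.Prime ∧ (∀ i j, mul i j = mul j i) ∧ ∀ i, (mul i)^[q] one = one := by
  classical
  letI : Group (GTy n) :=
    { mul := mul, one := one, inv := inv, mul_assoc := hassoc,
      one_mul := hone_mul, mul_one := hmul_one, inv_mul_cancel := hinv }
  letI : Fintype (GTy n) := inferInstanceAs (Fintype (Fin n))
  obtain ⟨x0, hx0⟩ := hex
  haveI : Nontrivial (GTy n) := ⟨⟨toG x0, toG one, fun h => hx0 h⟩⟩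
  -- powers of φ preserve mul
  have hφpow : ∀ (k : ℕ) (i j : Fin n), (φ ^ k) (mul i j) = mul ((φ ^ k) i) ((φ ^ k) j) := by
    intro k
    induction k with
    | zero => intro i j; simp
    | succ k ih =>
      intro i j
      have h1 : ∀ x, (φ ^ (k+1)) x = (φ ^ k) (φ x) := by
        intro x; rw [pow_succ, Equiv.Perm.mul_apply]
      rw [h1, h1, h1, hφmul, ih]
  have horder : ∀ (k : ℕ) (x : Fin n), orderOf (toG ((φ ^ k) x)) = orderOf (toG x) := by
    intro k x
    let e : GTy n ≃* GTy n := { toEquiv := (φ ^ k : Equiv.Perm (Fin n)), map_mul' := hφpow k }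
    exact orderOf_injective e.toMonoidHom e.injective (toG x)
  have hx0ne : toG x0 ≠ 1 := fun h => hx0 h
  set m := orderOf (toG x0) with hm
  have hm1 : m ≠ 1 := by
    intro h; exact hx0ne (orderOf_eq_one_iff.mp h)
  have hm0 : m ≠ 0 := (orderOf_pos (toG x0)).ne'
  set q := m.minFac with hqdef
  have hq : q.Prime := Nat.minFac_prime hm1
  set g : GTy n := (toG x0) ^ (m / q) with hg
  have hgord : orderOf g = q := by
    rw [hg, orderOf_pow]
    rw [Nat.gcd_eq_right (Nat.div_dvd_of_dvd m.minFac_dvd)]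
    exact Nat.div_div_self m.minFac_dvd hm0
  have hgne : g ≠ 1 := by
    intro h
    rw [h, orderOf_one] at hgord
    exact hq.ne_one hgord.symm
  have hordall : ∀ y : Fin n, y ≠ one → orderOf (toG y) = q := by
    intro y hy
    obtain ⟨k, hk⟩ := horb (g : GTy n) y (fun h => hgne h) hy
    have : toG ((φ ^ k) g) = toG y := by rw [hk]
    rw [← this]
    exact (horder k g).trans hgord
  have hPG : IsPGroup q (GTy n) := by
    intro a
    refine ⟨1, ?_⟩
    by_cases ha : a = 1
    · simp [ha]
    · rw [pow_one, ← hordall a (fun h => ha h)]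
      exact pow_orderOf_eq_one a
  haveI : Fact q.Prime := ⟨hq⟩
  haveI := hPG.center_nontrivial
  obtain ⟨⟨z, hzc⟩, hzne⟩ := exists_ne (1 : Subgroup.center (GTy n))
  have hz1 : (z : GTy n) ≠ 1 := by
    intro h; exact hzne (Subtype.ext h)
  have hzcomm : ∀ w : GTy n, z * w = w * z := by
    intro w
    exact (Subgroup.mem_center_iff.mp hzc w).symm
  have hcomm : ∀ a b : GTy n, a * b = b * a := by
    intro a b
    by_cases ha : a = 1
    · simp [ha]
    · obtain ⟨k, hk⟩ := horb (z : GTy n) (a : GTy n) (fun h => hz1 h) (fun h => ha h)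
      let e : GTy n ≃* GTy n := { toEquiv := (φ ^ k : Equiv.Perm (Fin n)), map_mul' := hφpow k }
      have ha' : a = e z := hk.symm
      rw [ha']
      calc e z * b = e z * e (e.symm b) := by rw [MulEquiv.apply_symm_apply]
        _ = e (z * e.symm b) := by rw [map_mul]
        _ = e (e.symm b * z) := by rw [hzcomm]
        _ = e (e.symm b) * e z := by rw [map_mul]
        _ = b * e z := by rw [MulEquiv.apply_symm_apply]
  have hiter : ∀ (i : Fin n) (k : ℕ), toG ((mul i)^[k] one) = (toG i) ^ k := by
    intro i k
    induction k with
    | zero => rfl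
    | succ k ih =>
      rw [Function.iterate_succ_apply', pow_succ']
      show toG i * toG ((mul i)^[k] one) = toG i * toG i ^ k
      rw [ih]
  refine ⟨q, hq, fun i j => hcomm (toG i) (toG j), fun i => ?_⟩
  have : toG ((mul i)^[q] one) = toG one := by
    rw [hiter]
    by_cases hi : toG i = 1
    · rw [hi, one_pow]; rfl
    · rw [← hordall i (fun h => hi h), pow_orderOf_eq_one]; rfl
  exact this


theorem mainA {n : ℕ} (F : FusionData n)
    (φ : Equiv.Perm (Fin n)) (hA : F.IsAut φ)
    (hfpf : F.Fpf φ) (d : Fin n → ℝ) (hd : F.IsFPdim d)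
    (hex : ∃ x, x ≠ F.one)
    (horb : ∀ x y, x ≠ F.one → y ≠ F.one → ∃ k : ℕ, (φ ^ k) x = y) :
    (∀ x, d x = 1) := by
  classical
  obtain ⟨hd1, hd2⟩ := hd
  have hinj : Function.Injective F.dual := Function.LeftInverse.injective F.dual_dual
  -- d one = 1
  have done1 : d F.one = 1 := by
    have h := hd2 F.one F.one
    simp only [F.c_one_left, apply_ite (Nat.cast : ℕ → ℝ), Nat.cast_one, Nat.cast_zero,
      ite_mul, one_mul, zero_mul, Finset.sum_ite_eq', Finset.mem_univ, if_true] at h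
    have := hd1 F.one
    nlinarith [h]
  -- dual one = one
  have dual_one : F.dual F.one = F.one := by
    have h1 : (if F.one = F.dual F.one then (1:ℕ) else 0) = 1 := by
      rw [← F.c_dual F.one F.one, F.c_one_left]
      simp
    by_contra hne
    rw [if_neg (fun h => hne h.symm)] at h1
    exact zero_ne_one h1
  have hdual_ne : ∀ i, i ≠ F.one → F.dual i ≠ F.one := by
    intro i hi h
    apply hi
    rw [← F.dual_dual i, h, dual_one]
  -- Frobenius reciprocity
  have frob1 : ∀ i j m, F.c i j m = F.c j (F.dual m) (F.dual i) := by
    intro i j m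
    have h := F.assoc i j (F.dual m) F.one
    simp only [F.c_dual, hinj.eq_iff, mul_ite, mul_one, mul_zero] at h
    rw [Finset.sum_ite_eq, Finset.sum_ite_eq'] at h
    simpa [F.dual_dual] using h
  have frob2 : ∀ i j m, F.c i j m = F.c (F.dual m) i (F.dual j) := by
    intro i j m
    rw [frob1, frob1 j, F.dual_dual]
  -- positivity of products
  have hpos_ex : ∀ i j, ∃ k, 0 < F.c i j k := by
    intro i j
    by_contra h
    push_neg at h
    have hz : ∀ k, F.c i j k = 0 := fun k => Nat.le_zero.mp (h k)
    have := hd2 i j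
    simp only [hz, Nat.cast_zero, zero_mul, Finset.sum_const_zero] at this
    nlinarith [hd1 i, hd1 j]
  have hApos : ∀ i k, ∃ j, 0 < F.c i j k := by
    intro i k
    obtain ⟨m, hm⟩ := hpos_ex (F.dual k) i
    refine ⟨F.dual m, ?_⟩
    rw [frob2, F.dual_dual]
    exact hm
  -- invariance of d under φ
  have hinvd : ∀ i, d (φ i) = d i := by
    set d' : Fin n → ℝ := fun i => d (φ.symm i) with hd'
    have hd'pos : ∀ i, 0 < d' i := fun i => hd1 _
    have hcsymm : ∀ i j k, F.c (φ.symm i) (φ.symm j) (φ.symm k) = F.c i j k := by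
      intro i j k
      have := hA.2 (φ.symm i) (φ.symm j) (φ.symm k)
      simpa using this.symm
    have hd'2 : ∀ i j, d' i * d' j = ∑ k, (F.c i j k : ℝ) * d' k := by
      intro i j
      have h := hd2 (φ.symm i) (φ.symm j)
      calc d' i * d' j = ∑ k, (F.c (φ.symm i) (φ.symm j) k : ℝ) * d k := h
        _ = ∑ k, (F.c (φ.symm i) (φ.symm j) (φ.symm k) : ℝ) * d (φ.symm k) :=
            (Equiv.sum_comp φ.symm (fun k => (F.c (φ.symm i) (φ.symm j) k : ℝ) * d k)).symm
        _ = ∑ k, (F.c i j k : ℝ) * d' k := by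
            refine Finset.sum_congr rfl fun k _ => ?_
            rw [hcsymm]
    -- eigen equation
    set S : ℝ := ∑ j, d j with hS
    have hS' : ∑ j, d' j = S := by
      rw [hS, ← Equiv.sum_comp φ.symm d]
    set A : Fin n → Fin n → ℝ := fun i k => ∑ j, (F.c i j k : ℝ) with hA'
    have heig : ∀ (e : Fin n → ℝ), (∀ i j, e i * e j = ∑ k, (F.c i j k : ℝ) * e k) →
        ∀ i, ∑ k, A i k * e k = (∑ j, e j) * e i := by
      intro e he i
      have : ∑ k, A i k * e k = ∑ j, ∑ k, (F.c i j k : ℝ) * e k := by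
        rw [Finset.sum_comm]
        refine Finset.sum_congr rfl fun k _ => ?_
        rw [hA', Finset.sum_mul]
      rw [this]
      have : ∑ j, ∑ k, (F.c i j k : ℝ) * e k = ∑ j, e i * e j := by
        refine Finset.sum_congr rfl fun j _ => (he i j).symm
      rw [this, ← Finset.mul_sum]
      ring
    obtain ⟨i₀, _, hi₀⟩ := Finset.exists_min_image Finset.univ (fun i => d' i / d i)
      ⟨F.one, Finset.mem_univ _⟩
    set t : ℝ := d' i₀ / d i₀ with ht
    set w : Fin n → ℝ := fun i => d' i - t * d i with hw
    have hwpos : ∀ i, 0 ≤ w i := by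
      intro i
      have h1 : t ≤ d' i / d i := hi₀ i (Finset.mem_univ i)
      have h2 : t * d i ≤ d' i := (le_div_iff₀ (hd1 i)).mp h1
      simp only [hw]
      linarith
    have hwi₀ : w i₀ = 0 := by
      have hne : d i₀ ≠ 0 := (hd1 i₀).ne'
      simp only [hw, ht]
      field_simp
      ring
    have hweig : ∀ i, ∑ k, A i k * w k = S * w i := by
      intro i
      have h1 := heig d hd2 i
      have h2 := heig d' hd'2 i
      rw [hS'] at h2
      simp only [hw, mul_sub, Finset.sum_sub_distrib]
      rw [← hS] at h1
      have h3 : ∑ k, A i k * (t * d k) = t * ∑ k, A i k * d k := by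
        rw [Finset.mul_sum]; refine Finset.sum_congr rfl fun k _ => by ring
      rw [h3, h1, h2]
      ring
    have hwzero : ∀ k, w k = 0 := by
      have h0 : ∑ k, A i₀ k * w k = 0 := by
        rw [hweig, hwi₀, mul_zero]
      have hnn : ∀ k ∈ Finset.univ, 0 ≤ A i₀ k * w k := by
        intro k _
        apply mul_nonneg _ (hwpos k)
        rw [hA']
        positivity
      intro k
      have := (Finset.sum_eq_zero_iff_of_nonneg hnn).mp h0 k (Finset.mem_univ k)
      have hAk : 0 < A i₀ k := by
        obtain ⟨j, hj⟩ := hApos i₀ k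
        rw [hA']
        refine Finset.sum_pos' (fun j' _ => by positivity) ⟨j, Finset.mem_univ j, by exact_mod_cast hj⟩
      have := mul_eq_zero.mp this
      rcases this with h | h
      · exact absurd h hAk.ne'
      · exact h
    have ht1 : t = 1 := by
      have h := hwzero F.one
      have hφone : φ.symm F.one = F.one := (Equiv.symm_apply_eq φ).mpr hA.1.symm
      simp only [hw, hd', hφone, done1] at h
      linarith
    intro i
    have h := hwzero (φ i)
    simp only [hw, hd', ht1, Equiv.symm_apply_apply, one_mul] at h
    linarith
  -- d constant on orbits
  have hiterd : ∀ (k : ℕ) (x : Fin n), d ((φ ^ k) x) = d x := by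
    intro k
    induction k with
    | zero => intro x; simp
    | succ k ih =>
      intro x
      have h1 : (φ ^ (k+1)) x = (φ ^ k) (φ x) := by rw [pow_succ, Equiv.Perm.mul_apply]
      rw [h1, ih, hinvd]
  have hconst : ∀ x y, x ≠ F.one → y ≠ F.one → d x = d y := by
    intro x y hx hy
    obtain ⟨k, hk⟩ := horb x y hx hy
    rw [← hk, hiterd]
  obtain ⟨x0, hx0⟩ := hex
  have hy : ∃ y, y ≠ F.one ∧ y ≠ F.dual x0 := by
    by_contra h
    push_neg at h
    have hφx0 : φ x0 ≠ F.one := by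
      intro hh
      exact hx0 (φ.injective (hh.trans hA.1.symm))
    have h1 := h x0 hx0
    have h2 := h (φ x0) hφx0
    exact hx0 (hfpf x0 (by rw [h2, ← h1]))
  obtain ⟨y, hy1, hy2⟩ := hy
  have hdual_x0 : F.dual x0 ≠ F.one := hdual_ne x0 hx0
  have hdk : ∀ k, k ≠ F.one → d k = d x0 := fun k hk => hconst k x0 hk hx0
  set M : ℕ := ∑ k, F.c x0 y k with hM
  set N : ℕ := ∑ k, F.c x0 (F.dual x0) k with hN
  have hcone : F.c x0 y F.one = 0 := by
    rw [F.c_dual, if_neg hy2]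
  have hcone2 : F.c x0 (F.dual x0) F.one = 1 := by
    rw [F.c_dual, if_pos rfl]
  have heq1 : d x0 * d x0 = (M : ℝ) * d x0 := by
    have h := hd2 x0 y
    rw [hdk y hy1] at h
    rw [h, hM, Nat.cast_sum, Finset.sum_mul]
    refine Finset.sum_congr rfl fun k _ => ?_
    by_cases hk : k = F.one
    · subst hk; rw [hcone]; simp
    · rw [hdk k hk]
  have hδM : d x0 = (M : ℝ) := mul_right_cancel₀ (hd1 x0).ne' heq1
  have heq2 : d x0 * d x0 = (N : ℝ) * d x0 + (1 - d x0) := by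
    have h := hd2 x0 (F.dual x0)
    rw [hdk _ hdual_x0] at h
    rw [h]
    have hcg : ∀ k ∈ Finset.univ, (F.c x0 (F.dual x0) k : ℝ) * d k
        = (F.c x0 (F.dual x0) k : ℝ) * d x0 + (if k = F.one then (1 - d x0) else 0) := by
      intro k _
      by_cases hk : k = F.one
      · subst hk; rw [hcone2, done1, if_pos rfl]; push_cast; ring
      · rw [hdk k hk, if_neg hk, add_zero]
    rw [Finset.sum_congr rfl hcg, Finset.sum_add_distrib,
      Finset.sum_ite_eq' Finset.univ F.one, if_pos (Finset.mem_univ _),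
      ← Finset.sum_mul, ← Nat.cast_sum]
  have hnat : M * M + M = N * M + 1 := by
    have hr : (M : ℝ) * M + M = N * M + 1 := by
      rw [← hδM]; linarith [heq2]
    exact_mod_cast hr
  have hM1 : M = 1 := by
    have h1 : M ∣ M * M + M := ⟨M + 1, by ring⟩
    have h2 : M ∣ N * M := Dvd.intro_left N rfl
    rw [hnat] at h1
    exact Nat.dvd_one.mp ((Nat.dvd_add_right h2).mp h1)
  have hdx0 : d x0 = 1 := by rw [hδM, hM1, Nat.cast_one]
  intro x
  by_cases hx : x = F.one
  · rw [hx, done1]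
  · rw [hconst x x0 hx hx0, hdx0]


theorem partB {n : ℕ} (F : FusionData n) (d : Fin n → ℝ) (hd : F.IsFPdim d)
    (alld : ∀ x, d x = 1) :
    ∃ mul : Fin n → Fin n → Fin n,
      (∀ i j k, F.c i j k = if k = mul i j then 1 else 0) ∧
      (∀ a, mul F.one a = a) ∧ (∀ a, mul a F.one = a) ∧
      (∀ a, mul (F.dual a) a = F.one) ∧
      (∀ a b e, mul (mul a b) e = mul a (mul b e)) ∧
      (∀ i j k, F.c i j k = 1 → mul i j = k) := by
  classical
  obtain ⟨hd1, hd2⟩ := hd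
  have hsum1 : ∀ i j, ∑ k, F.c i j k = 1 := by
    intro i j
    have h := hd2 i j
    simp only [alld, mul_one, one_mul] at h
    have h2 : ((∑ k, F.c i j k : ℕ) : ℝ) = 1 := by push_cast; linarith
    exact_mod_cast h2
  have hone_of : ∀ i j, ∃ k₀, ∀ k, F.c i j k = if k = k₀ then 1 else 0 := by
    intro i j
    have hs := hsum1 i j
    have hex0 : ∃ k₀, F.c i j k₀ ≠ 0 := by
      by_contra h
      push_neg at h
      rw [Finset.sum_eq_zero (fun k _ => h k)] at hs
      exact zero_ne_one hs
    obtain ⟨k₀, hk₀⟩ := hex0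
    refine ⟨k₀, fun k => ?_⟩
    by_cases hk : k = k₀
    · subst hk
      rw [if_pos rfl]
      have hle : F.c i j k ≤ 1 :=
        hs ▸ Finset.single_le_sum (f := fun k' => F.c i j k') (fun _ _ => Nat.zero_le _) (Finset.mem_univ k)
      omega
    · rw [if_neg hk]
      by_contra h0
      have h2 : ∑ k' ∈ ({k, k₀} : Finset (Fin n)), F.c i j k' = F.c i j k + F.c i j k₀ :=
        Finset.sum_pair hk
      have h3 : F.c i j k + F.c i j k₀ ≤ ∑ k', F.c i j k' := by
        rw [← h2]
        exact Finset.sum_le_sum_of_subset (Finset.subset_univ _)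
      omega
  choose mul hmulspec using hone_of
  have eqmul : ∀ i j k, F.c i j k = 1 → mul i j = k := by
    intro i j k h
    rw [hmulspec] at h
    by_contra hne
    rw [if_neg (fun hh => hne hh.symm)] at h
    exact zero_ne_one h
  have hone_mul : ∀ a, mul F.one a = a := fun a =>
    eqmul F.one a a (by rw [F.c_one_left, if_pos rfl])
  have hmul_one : ∀ a, mul a F.one = a := fun a =>
    eqmul a F.one a (by rw [F.c_one_right, if_pos rfl])
  have hinvmul : ∀ a, mul (F.dual a) a = F.one := fun a =>
    eqmul (F.dual a) a F.one (by rw [F.c_dual, if_pos (F.dual_dual a).symm])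
  have hlft : ∀ i j l m, (∑ k, F.c i j k * F.c k l m) = F.c (mul i j) l m := by
    intro i j l m
    rw [Finset.sum_eq_single_of_mem (mul i j) (Finset.mem_univ _)
      (fun k _ hk => by rw [hmulspec i j, if_neg hk, zero_mul])]
    rw [hmulspec i j, if_pos rfl, one_mul]
  have hrgt : ∀ i j l m, (∑ k, F.c j l k * F.c i k m) = F.c i (mul j l) m := by
    intro i j l m
    rw [Finset.sum_eq_single_of_mem (mul j l) (Finset.mem_univ _)
      (fun k _ hk => by rw [hmulspec j l, if_neg hk, zero_mul])]
    rw [hmulspec j l, if_pos rfl, one_mul]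
  have hassoc : ∀ a b e, mul (mul a b) e = mul a (mul b e) := by
    intro a b e
    have h := F.assoc a b e (mul (mul a b) e)
    rw [hlft, hrgt] at h
    have h1 : F.c (mul a b) e (mul (mul a b) e) = 1 := by
      rw [hmulspec, if_pos rfl]
    rw [h1] at h
    exact (eqmul _ _ _ h.symm).symm
  exact ⟨mul, hmulspec, hone_mul, hmul_one, hinvmul, hassoc, eqmul⟩


theorem stmt16 {n p : ℕ} (hp : p.Prime) (F : FusionData n)
    (φ : Equiv.Perm (Fin n)) (hA : F.IsAut φ) (hord : orderOf φ = p)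
    (hfpf : F.Fpf φ) (d : Fin n → ℝ) (hd : F.IsFPdim d)
    (hex : ∃ x, x ≠ F.one)
    (horb : ∀ x y, x ≠ F.one → y ≠ F.one → ∃ k : ℕ, (φ ^ k) x = y) :
    (∀ x, d x = 1) ∧
      ∃ mul : Fin n → Fin n → Fin n,
        (∀ i j k, F.c i j k = if k = mul i j then 1 else 0) ∧
        ∃ q : ℕ, q.Prime ∧ (∀ i j, mul i j = mul j i) ∧
          ∀ i, (mul i)^[q] F.one = F.one := by
  classical
  have alld : ∀ x, d x = 1 := mainA F φ hA hfpf d hd hex horb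
  obtain ⟨mul, hmulspec, hone_mul, hmul_one, hinvmul, hassoc, eqmul⟩ := partB F d hd alld
  have hφmul : ∀ i j, φ (mul i j) = mul (φ i) (φ j) := by
    intro i j
    have h : F.c (φ i) (φ j) (φ (mul i j)) = 1 := by
      rw [hA.2, hmulspec, if_pos rfl]
    exact (eqmul _ _ _ h).symm
  obtain ⟨q, hq, hcomm, hiter⟩ :=
    groupPart mul F.one F.dual hassoc hone_mul hmul_one hinvmul φ hφmul hex horb
  exact ⟨alld, mul, hmulspec, q, hq, hcomm, hiter⟩
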